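/- arXiv:2211.03813 — 2 statements merged into one kernel-verified Lean document; each statement's English description precedes it below -/
import Mathlib

section
/- Let |ψ⟩ = Σ_i t_i |i⟩ be a pure singlet state in (ℂ^d)^{⊗n}. Then for each k ∈ {0, …, d−1} there exists a natural number N_k such that every multi-index l with t_l ≠ 0 contains the value k exactly N_k times. Consequently Σ_{k=0}^{d−1} N_k = n. -/
open scoped BigOperators
open Complex

noncomputable def tensorAction {d n : ℕ} (U : Matrix (Fin d) (Fin d) ℂ)
    (t : (Fin n → Fin d) → ℂ) : (Fin n → Fin d) → ℂ :=
  fun i => ∑ j : Fin n → Fin d, (∏ α : Fin n, U (i α) (j α)) * t j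

lemma expI_pow_inj : Function.Injective (fun m : ℕ => Complex.exp I ^ m) := by
  intro m m' h
  simp only [← Complex.exp_nat_mul] at h
  rw [Complex.exp_eq_exp_iff_exists_int] at h
  obtain ⟨z, hz⟩ := h
  have : ((m : ℂ) - m') * I = (z * (2 * Real.pi)) * I := by
    rw [sub_mul, hz]; ring
  have h2 : ((m : ℂ) - m') = (z * (2 * Real.pi) : ℝ) := by
    field_simp at this
    push_cast; linear_combination this
  have h3 : ((m : ℝ) - m') = z * (2 * Real.pi) := by exact_mod_cast h2
  by_cases hzz : z = 0
  · subst hzz; simp at h3; exact_mod_cast sub_eq_zero.mp h3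
  · exfalso
    have : Real.pi = ((m : ℝ) - m') / (2 * z) := by
      field_simp at h3 ⊢; linarith [h3]
    have : Irrational (((m:ℤ) - m' : ℤ) / ((2 * z : ℤ)) : ℝ) := by
      push_cast
      rw [← this]; exact irrational_pi
    rw [show ((((m:ℤ) - m' : ℤ) : ℝ) / (((2 * z : ℤ)) : ℝ)) = ((((m:ℤ)-m') / (2*z) : ℚ) : ℝ) by push_cast; ring] at this
    exact this.ne_rat _ rfl

lemma diag_action {d n : ℕ} (f : Fin d → ℂ) (t : (Fin n → Fin d) → ℂ)
    (l : Fin n → Fin d) :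
    tensorAction (Matrix.diagonal f) t l = (∏ α : Fin n, f (l α)) * t l := by
  unfold tensorAction
  rw [Finset.sum_eq_single l]
  · congr 1
    exact Finset.prod_congr rfl fun α _ => by simp [Matrix.diagonal]
  · intro j _ hj
    obtain ⟨α, hα⟩ := Function.ne_iff.mp hj
    have : Matrix.diagonal f (l α) (j α) = 0 := Matrix.diagonal_apply_ne f (Ne.symm hα)
    rw [Finset.prod_eq_zero (Finset.mem_univ α) this, zero_mul]
  · simp

lemma diag_unitary {d : ℕ} (f : Fin d → ℂ) (hf : ∀ i, f i * starRingEnd ℂ (f i) = 1) :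
    Matrix.diagonal f ∈ Matrix.unitaryGroup (Fin d) ℂ := by
  rw [Matrix.mem_unitaryGroup_iff]
  rw [Matrix.star_eq_conjTranspose, Matrix.diagonal_conjTranspose, Matrix.diagonal_mul_diagonal]
  have h1 : (fun i => f i * star f i) = fun _ => (1:ℂ) := funext fun i => by
    simpa using hf i
  rw [h1]
  exact Matrix.diagonal_one

/-- For a pure singlet state `|ψ⟩ = ∑ᵢ tᵢ|i⟩ ∈ (ℂ^d)^{⊗n}`, for each value
`k ∈ {0,…,d-1}` there is a number `N k` such that every multi-index `l` with
`t l ≠ 0` contains the value `k` exactly `N k` times; moreover `∑ₖ N k = n`. -/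
theorem stmt_4 (d n : ℕ) (t : (Fin n → Fin d) → ℂ) (ht : t ≠ 0)
    (hsinglet : ∀ U ∈ Matrix.unitaryGroup (Fin d) ℂ, ∃ c : ℂ, tensorAction U t = c • t) :
    ∃ N : Fin d → ℕ,
      (∀ k : Fin d, ∀ l : Fin n → Fin d, t l ≠ 0 →
        (Finset.univ.filter fun α : Fin n => l α = k).card = N k) ∧
      ∑ k : Fin d, N k = n := by
  obtain ⟨l0, hl0⟩ := Function.ne_iff.mp ht
  simp only [Pi.zero_apply] at hl0
  set m : Fin d → (Fin n → Fin d) → ℕ :=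
    fun k l => (Finset.univ.filter fun α : Fin n => l α = k).card with hm
  have key : ∀ k : Fin d, ∀ l : Fin n → Fin d, t l ≠ 0 → m k l = m k l0 := by
    intro k l hl
    set f : Fin d → ℂ := fun i => if i = k then Complex.exp I else 1 with hfdef
    have hU : Matrix.diagonal f ∈ Matrix.unitaryGroup (Fin d) ℂ := by
      apply diag_unitary
      intro i
      by_cases h : i = k <;> simp [hfdef, h, ← Complex.exp_conj, ← Complex.exp_add]
    obtain ⟨c, hc⟩ := hsinglet _ hU
    have prodf : ∀ l : Fin n → Fin d, (∏ α : Fin n, f (l α)) = Complex.exp I ^ m k l := by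
      intro l
      rw [hm]
      simp only [hfdef]
      rw [Finset.prod_ite, Finset.prod_const, Finset.prod_const_one, mul_one]
    have e1 : Complex.exp I ^ m k l * t l = c * t l := by
      have := congrFun hc l
      rwa [diag_action, prodf, Pi.smul_apply, smul_eq_mul] at this
    have e2 : Complex.exp I ^ m k l0 * t l0 = c * t l0 := by
      have := congrFun hc l0
      rwa [diag_action, prodf, Pi.smul_apply, smul_eq_mul] at this
    have h1 : Complex.exp I ^ m k l = c := mul_right_cancel₀ hl e1
    have h2 : Complex.exp I ^ m k l0 = c := mul_right_cancel₀ hl0 e2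
    exact expI_pow_inj (h1.trans h2.symm)
  refine ⟨fun k => m k l0, ?_, ?_⟩
  · intro k l hl
    exact key k l hl
  have : ∑ k : Fin d, m k l0 = (Finset.univ : Finset (Fin n)).card := by
    rw [hm]
    exact (Finset.card_eq_sum_card_fiberwise
      (f := l0) (s := Finset.univ) (t := Finset.univ)
      (fun α _ => Finset.mem_univ (l0 α))).symm
  rw [this, Finset.card_univ, Fintype.card_fin]
end

section
/- Let (t_i) be the coefficients of a nonzero vector in (ℂ^d)^{⊗n} that is an eigenvector of D^{⊗n} for every diagonal unitary D. Then for any two multi-indices j, l with t_j ≠ 0 and t_l ≠ 0, and for every k ∈ {0,…,d−1}, the number of occurrences of k in j equals the number of occurrences of k in l. -/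
open scoped BigOperators

lemma tensorAction_diagonal {d n : ℕ} (D : Fin d → ℂ) (t : (Fin n → Fin d) → ℂ)
    (i : Fin n → Fin d) :
    tensorAction (Matrix.diagonal D) t i = (∏ α : Fin n, D (i α)) * t i := by
  unfold tensorAction
  rw [Finset.sum_eq_single i]
  · simp [Matrix.diagonal_apply_eq]
  · intro j _ hji
    have hα : ∃ α, i α ≠ j α := by
      by_contra h; push_neg at h
      exact hji (funext fun α => (h α).symm)
    obtain ⟨α, hα⟩ := hα
    rw [Finset.prod_eq_zero (Finset.mem_univ α) (Matrix.diagonal_apply_ne D hα), zero_mul]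
  · simp

lemma prod_ite_pow {n : ℕ} {d : ℕ} (j : Fin n → Fin d) (k : Fin d) (ζ : ℂ) :
    (∏ α : Fin n, (if j α = k then ζ else 1)) =
      ζ ^ (Finset.univ.filter fun α : Fin n => j α = k).card := by
  rw [Finset.prod_ite, Finset.prod_const, Finset.prod_const_one, mul_one]

set_option maxHeartbeats 1000000 in
/-- If the coefficient vector `t` of a nonzero state in `(ℂ^d)^{⊗n}` is an
eigenvector of `D^{⊗n}` for every diagonal unitary `D` (diagonal entries of
modulus one), then any two multi-indices carrying nonzero coefficients contain
every value `k ∈ {0,…,d-1}` equally often. -/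
theorem stmt_5 (d n : ℕ) (t : (Fin n → Fin d) → ℂ) (ht : t ≠ 0)
    (hdiag : ∀ D : Fin d → ℂ, (∀ a : Fin d, ‖D a‖ = 1) →
      ∃ c : ℂ, tensorAction (Matrix.diagonal D) t = c • t) :
    ∀ j l : Fin n → Fin d, t j ≠ 0 → t l ≠ 0 → ∀ k : Fin d,
      (Finset.univ.filter fun α : Fin n => j α = k).card =
        (Finset.univ.filter fun α : Fin n => l α = k).card := by
  intro j l hj hl k
  obtain ⟨ζ, hprim⟩ : ∃ ζ : ℂ, IsPrimitiveRoot ζ (n + 1) :=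
    ⟨_, Complex.isPrimitiveRoot_exp (n + 1) (Nat.succ_ne_zero n)⟩
  have habsζ : ‖ζ‖ = 1 := by
    exact Complex.norm_eq_one_of_pow_eq_one hprim.pow_eq_one (Nat.succ_ne_zero n)
  set D : Fin d → ℂ := fun a => if a = k then ζ else 1 with hD
  have habs : ∀ a : Fin d, ‖D a‖ = 1 := by
    intro a
    simp only [hD]
    split <;> simp [habsζ]
  obtain ⟨c, hc⟩ := hdiag D habs
  have key : ∀ i : Fin n → Fin d, t i ≠ 0 →
      ζ ^ (Finset.univ.filter fun α : Fin n => i α = k).card = c := by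
    intro i hi
    have := congrFun hc i
    rw [tensorAction_diagonal] at this
    have hprod : (∏ α : Fin n, D (i α)) =
        ζ ^ (Finset.univ.filter fun α : Fin n => i α = k).card := by
      simpa [hD] using prod_ite_pow i k ζ
    rw [hprod] at this
    simp only [Pi.smul_apply, smul_eq_mul] at this
    exact mul_right_cancel₀ hi this
  have heq : ζ ^ (Finset.univ.filter fun α : Fin n => j α = k).card =
      ζ ^ (Finset.univ.filter fun α : Fin n => l α = k).card := by
    rw [key j hj, key l hl]
  have hjlt : (Finset.univ.filter fun α : Fin n => j α = k).card < n + 1 :=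
    Nat.lt_succ_of_le ((Finset.card_filter_le _ _).trans (by simp))
  have hllt : (Finset.univ.filter fun α : Fin n => l α = k).card < n + 1 :=
    Nat.lt_succ_of_le ((Finset.card_filter_le _ _).trans (by simp))
  exact hprim.pow_inj hjlt hllt heq
end
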